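/- Let α ∈ [0,1] and β ∈ (0,1) and consider the two-piece environment P_{α,β}. Then the conditional law of the pair (Y, B_c) given the event {B_s = Y} equals its conditional law given the event {B_s ≠ Y} (both events having positive probability), whereas the conditional law of the pair (Y, B_s) given {B_s = Y} differs from its conditional law given {B_s ≠ Y}. Hence the invariant coordinate B_c is exactly the coordinate whose joint relationship with the label Y is unchanged across the correctness-based partition induced by the assistant prediction ŷ = B_s, which is the identification principle underlying GALA's contrast between positive and negative sets. -/

import Mathlib

open MeasureTheory
open scoped ENNReal

/-- The Rademacher-type measure `Rad(γ)` on `ℤ`, putting mass `γ` on `-1` and `1-γ` on `1`. -/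
noncomputable def radMeas (γ : ℝ) : Measure ℤ :=
  ENNReal.ofReal γ • Measure.dirac (-1) + ENNReal.ofReal (1 - γ) • Measure.dirac 1

/-- The two-piece environment `P_{α,β}`: the joint law of `(Y, Y·R_c, Y·R_s)` where
`Y ~ Rad(1/2)` (uniform on `{-1,1}`), `R_c ~ Rad(α)`, `R_s ~ Rad(β)`, mutually independent. -/
noncomputable def twoPiece (α β : ℝ) : Measure (ℤ × ℤ × ℤ) :=
  Measure.map (fun t : ℤ × ℤ × ℤ => (t.1, t.1 * t.2.1, t.1 * t.2.2))
    ((radMeas (1 / 2)).prod ((radMeas α).prod (radMeas β)))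

lemma sigmaFinite_smul' {α : Type*} [MeasurableSpace α] (μ : Measure α) [SigmaFinite μ]
    {c : ℝ≥0∞} (hc : c ≠ ∞) : SigmaFinite (c • μ) := by
  lift c to NNReal using hc
  have h : (c : ℝ≥0∞) • μ = c • μ := by
    ext s hs
    simp
  rw [h]
  infer_instance

instance radMeas.isFiniteMeasure (γ : ℝ) : IsFiniteMeasure (radMeas γ) := by
  have : IsFiniteMeasure (ENNReal.ofReal γ • Measure.dirac (-1 : ℤ) +
      ENNReal.ofReal (1 - γ) • Measure.dirac (1 : ℤ)) := by
    refine ⟨?_⟩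
    simp [ENNReal.mul_lt_top, ENNReal.add_lt_top, ENNReal.ofReal_lt_top]
  simpa [radMeas] using this

lemma smul_prod'' {α β : Type*} [MeasurableSpace α] [MeasurableSpace β] {c : ℝ≥0∞} (hc : c ≠ ∞)
    (μ : Measure α) (ν : Measure β) [SigmaFinite μ] [SigmaFinite ν] :
    (c • μ).prod ν = c • μ.prod ν := by
  haveI := sigmaFinite_smul' μ hc
  exact Measure.prod_eq (μ := c • μ) (ν := ν) (μν := c • μ.prod ν) fun s t hs ht => by
    simp [Measure.prod_prod, mul_assoc]

lemma rad_prod {β' : Type*} [MeasurableSpace β'] (γ : ℝ) (ν : Measure β') [SigmaFinite ν] :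
    (radMeas γ).prod ν = ENNReal.ofReal γ • ν.map (Prod.mk (-1 : ℤ)) +
      ENNReal.ofReal (1 - γ) • ν.map (Prod.mk (1 : ℤ)) := by
  rw [radMeas, Measure.add_prod, smul_prod'' ENNReal.ofReal_ne_top,
    smul_prod'' ENNReal.ofReal_ne_top, Measure.dirac_prod, Measure.dirac_prod]

lemma twoPiece_eq (α β : ℝ) :
    twoPiece α β =
      ENNReal.ofReal (1/2) •
        (ENNReal.ofReal α • (ENNReal.ofReal β • Measure.dirac ((-1 : ℤ), (1 : ℤ), (1 : ℤ)) +
            ENNReal.ofReal (1 - β) • Measure.dirac ((-1 : ℤ), (1 : ℤ), (-1 : ℤ))) +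
         ENNReal.ofReal (1 - α) • (ENNReal.ofReal β • Measure.dirac ((-1 : ℤ), (-1 : ℤ), (1 : ℤ)) +
            ENNReal.ofReal (1 - β) • Measure.dirac ((-1 : ℤ), (-1 : ℤ), (-1 : ℤ)))) +
      ENNReal.ofReal (1/2) •
        (ENNReal.ofReal α • (ENNReal.ofReal β • Measure.dirac ((1 : ℤ), (-1 : ℤ), (-1 : ℤ)) +
            ENNReal.ofReal (1 - β) • Measure.dirac ((1 : ℤ), (-1 : ℤ), (1 : ℤ))) +
         ENNReal.ofReal (1 - α) • (ENNReal.ofReal β • Measure.dirac ((1 : ℤ), (1 : ℤ), (-1 : ℤ)) +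
            ENNReal.ofReal (1 - β) • Measure.dirac ((1 : ℤ), (1 : ℤ), (1 : ℤ)))) := by
  have hmapβ : ∀ x : ℤ, (radMeas β).map (Prod.mk x) =
      ENNReal.ofReal β • Measure.dirac (x, (-1 : ℤ)) +
      ENNReal.ofReal (1 - β) • Measure.dirac (x, (1 : ℤ)) := by
    intro x
    rw [radMeas, Measure.map_add _ _ measurable_prodMk_left,
      Measure.map_smul, Measure.map_smul,
      Measure.map_dirac' measurable_prodMk_left, Measure.map_dirac' measurable_prodMk_left]
  have hinner : (radMeas α).prod (radMeas β) =
      ENNReal.ofReal α • (ENNReal.ofReal β • Measure.dirac ((-1 : ℤ), (-1 : ℤ)) +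
        ENNReal.ofReal (1 - β) • Measure.dirac ((-1 : ℤ), (1 : ℤ))) +
      ENNReal.ofReal (1 - α) • (ENNReal.ofReal β • Measure.dirac ((1 : ℤ), (-1 : ℤ)) +
        ENNReal.ofReal (1 - β) • Measure.dirac ((1 : ℤ), (1 : ℤ))) := by
    rw [rad_prod, hmapβ, hmapβ]
  have hf : Measurable (fun t : ℤ × ℤ × ℤ => (t.1, t.1 * t.2.1, t.1 * t.2.2)) :=
    measurable_of_countable _
  have h12 : (1 : ℝ) - 1/2 = 1/2 := by norm_num
  rw [twoPiece, rad_prod, hinner, h12]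
  rw [Measure.map_add _ _ hf, Measure.map_smul, Measure.map_smul]
  congr 2
  · rw [Measure.map_add _ _ measurable_prodMk_left, Measure.map_smul, Measure.map_smul,
      Measure.map_add _ _ measurable_prodMk_left, Measure.map_smul, Measure.map_smul,
      Measure.map_add _ _ measurable_prodMk_left, Measure.map_smul, Measure.map_smul,
      Measure.map_dirac' measurable_prodMk_left, Measure.map_dirac' measurable_prodMk_left,
      Measure.map_dirac' measurable_prodMk_left, Measure.map_dirac' measurable_prodMk_left,
      Measure.map_add _ _ hf, Measure.map_smul, Measure.map_smul,
      Measure.map_add _ _ hf, Measure.map_smul, Measure.map_smul,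
      Measure.map_add _ _ hf, Measure.map_smul, Measure.map_smul,
      Measure.map_dirac' hf, Measure.map_dirac' hf, Measure.map_dirac' hf, Measure.map_dirac' hf]
    norm_num
  · rw [Measure.map_add _ _ measurable_prodMk_left, Measure.map_smul, Measure.map_smul,
      Measure.map_add _ _ measurable_prodMk_left, Measure.map_smul, Measure.map_smul,
      Measure.map_add _ _ measurable_prodMk_left, Measure.map_smul, Measure.map_smul,
      Measure.map_dirac' measurable_prodMk_left, Measure.map_dirac' measurable_prodMk_left,
      Measure.map_dirac' measurable_prodMk_left, Measure.map_dirac' measurable_prodMk_left,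
      Measure.map_add _ _ hf, Measure.map_smul, Measure.map_smul,
      Measure.map_add _ _ hf, Measure.map_smul, Measure.map_smul,
      Measure.map_add _ _ hf, Measure.map_smul, Measure.map_smul,
      Measure.map_dirac' hf, Measure.map_dirac' hf, Measure.map_dirac' hf, Measure.map_dirac' hf]
    norm_num

lemma collect_aux (h A A' B : ℝ≥0∞) (hH : h + h = 1) (hA : A + A' = 1) :
    h * (A * B + A' * B) + h * (A * B + A' * B) = B := by
  have e : h * (A * B + A' * B) + h * (A * B + A' * B) = (h + h) * ((A + A') * B) := by ring
  rw [e, hH, hA, one_mul, one_mul]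

/-- both correctness-based events of the assistant prediction (the spurious
coordinate) have positive probability; the conditional law of the pair (label, invariant
coordinate) is identical on the positive and negative sets, whereas the conditional law of
the pair (label, spurious coordinate) differs between them. -/
theorem twoPiece_gala_identification (α β : ℝ) (hα : α ∈ Set.Icc (0 : ℝ) 1)
    (hβ : β ∈ Set.Ioo (0 : ℝ) 1) :
    0 < twoPiece α β {t : ℤ × ℤ × ℤ | t.2.2 = t.1} ∧
    0 < twoPiece α β {t : ℤ × ℤ × ℤ | t.2.2 ≠ t.1} ∧
    Measure.map (fun t : ℤ × ℤ × ℤ => (t.1, t.2.1))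
        (ProbabilityTheory.cond (twoPiece α β) {t : ℤ × ℤ × ℤ | t.2.2 = t.1}) =
      Measure.map (fun t : ℤ × ℤ × ℤ => (t.1, t.2.1))
        (ProbabilityTheory.cond (twoPiece α β) {t : ℤ × ℤ × ℤ | t.2.2 ≠ t.1}) ∧
    Measure.map (fun t : ℤ × ℤ × ℤ => (t.1, t.2.2))
        (ProbabilityTheory.cond (twoPiece α β) {t : ℤ × ℤ × ℤ | t.2.2 = t.1}) ≠
      Measure.map (fun t : ℤ × ℤ × ℤ => (t.1, t.2.2))
        (ProbabilityTheory.cond (twoPiece α β) {t : ℤ × ℤ × ℤ | t.2.2 ≠ t.1}) := by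
  classical
  obtain ⟨hα0, hα1⟩ := hα
  obtain ⟨hβ0, hβ1⟩ := hβ
  set A := ENNReal.ofReal α with hAdef
  set A' := ENNReal.ofReal (1 - α) with hA'def
  set B := ENNReal.ofReal β with hBdef
  set B' := ENNReal.ofReal (1 - β) with hB'def
  set h := ENNReal.ofReal (1/2) with hhdef
  have hA : A + A' = 1 := by
    rw [hAdef, hA'def, ← ENNReal.ofReal_add hα0 (by linarith)]; norm_num
  have hH : h + h = 1 := by
    rw [hhdef, ← ENNReal.ofReal_add] <;> norm_num
  have hB0 : B ≠ 0 := by simp [hBdef, ENNReal.ofReal_eq_zero]; linarith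
  have hB'0 : B' ≠ 0 := by simp [hB'def, ENNReal.ofReal_eq_zero]; linarith
  have hBt : B ≠ ∞ := ENNReal.ofReal_ne_top
  have hB't : B' ≠ ∞ := ENNReal.ofReal_ne_top
  set S : Set (ℤ × ℤ × ℤ) := {t | t.2.2 = t.1} with hSdef
  set T : Set (ℤ × ℤ × ℤ) := {t | t.2.2 ≠ t.1} with hTdef
  -- total masses
  have hμS : twoPiece α β S = B' := by
    rw [twoPiece_eq]
    simp only [Measure.coe_add, Pi.add_apply, Measure.smul_apply, smul_eq_mul,
      Measure.dirac_apply, Set.indicator_apply, hSdef, Set.mem_setOf_eq]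
    norm_num
    exact collect_aux h A A' B' hH hA
  have hμT : twoPiece α β T = B := by
    rw [twoPiece_eq]
    simp only [Measure.coe_add, Pi.add_apply, Measure.smul_apply, smul_eq_mul,
      Measure.dirac_apply, Set.indicator_apply, hTdef, Set.mem_setOf_eq]
    norm_num
    exact collect_aux h A A' B hH hA
  -- conditional measures
  set ν : Measure (ℤ × ℤ × ℤ) :=
      h • (A • Measure.dirac ((-1 : ℤ), (1 : ℤ), (-1 : ℤ)) +
           A' • Measure.dirac ((-1 : ℤ), (-1 : ℤ), (-1 : ℤ))) +
      h • (A • Measure.dirac ((1 : ℤ), (-1 : ℤ), (1 : ℤ)) +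
           A' • Measure.dirac ((1 : ℤ), (1 : ℤ), (1 : ℤ))) with hνdef
  set ν' : Measure (ℤ × ℤ × ℤ) :=
      h • (A • Measure.dirac ((-1 : ℤ), (1 : ℤ), (1 : ℤ)) +
           A' • Measure.dirac ((-1 : ℤ), (-1 : ℤ), (1 : ℤ))) +
      h • (A • Measure.dirac ((1 : ℤ), (-1 : ℤ), (-1 : ℤ)) +
           A' • Measure.dirac ((1 : ℤ), (1 : ℤ), (-1 : ℤ))) with hν'def
  have hresS : (twoPiece α β).restrict S = B' • ν := by
    rw [twoPiece_eq]
    simp only [Measure.restrict_add, Measure.restrict_smul, MeasureTheory.restrict_dirac,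
      hSdef, Set.mem_setOf_eq]
    norm_num
    refine Measure.ext fun s hs => ?_
    simp only [hνdef, Measure.coe_add, Pi.add_apply, Measure.smul_apply, smul_eq_mul]
    norm_num
    try ring
  have hresT : (twoPiece α β).restrict T = B • ν' := by
    rw [twoPiece_eq]
    simp only [Measure.restrict_add, Measure.restrict_smul, MeasureTheory.restrict_dirac,
      hTdef, Set.mem_setOf_eq]
    norm_num
    refine Measure.ext fun s hs => ?_
    simp only [hν'def, Measure.coe_add, Pi.add_apply, Measure.smul_apply, smul_eq_mul]
    norm_num
    try ring
  have hcondS : ProbabilityTheory.cond (twoPiece α β) S = ν := by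
    rw [ProbabilityTheory.cond, hμS, hresS, smul_smul, ENNReal.inv_mul_cancel hB'0 hB't,
      one_smul]
  have hcondT : ProbabilityTheory.cond (twoPiece α β) T = ν' := by
    rw [ProbabilityTheory.cond, hμT, hresT, smul_smul, ENNReal.inv_mul_cancel hB0 hBt,
      one_smul]
  have hf1 : Measurable (fun t : ℤ × ℤ × ℤ => (t.1, t.2.1)) := measurable_of_countable _
  have hf2 : Measurable (fun t : ℤ × ℤ × ℤ => (t.1, t.2.2)) := measurable_of_countable _
  refine ⟨by rw [hμS]; exact pos_iff_ne_zero.mpr hB'0,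
          by rw [hμT]; exact pos_iff_ne_zero.mpr hB0, ?_, ?_⟩
  · rw [hcondS, hcondT, hνdef, hν'def]
    rw [Measure.map_add _ _ hf1, Measure.map_smul, Measure.map_smul,
      Measure.map_add _ _ hf1, Measure.map_smul, Measure.map_smul,
      Measure.map_add _ _ hf1, Measure.map_smul, Measure.map_smul,
      Measure.map_add _ _ hf1, Measure.map_smul, Measure.map_smul,
      Measure.map_add _ _ hf1, Measure.map_smul, Measure.map_smul,
      Measure.map_add _ _ hf1, Measure.map_smul, Measure.map_smul,
      Measure.map_dirac' hf1, Measure.map_dirac' hf1, Measure.map_dirac' hf1,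
      Measure.map_dirac' hf1, Measure.map_dirac' hf1, Measure.map_dirac' hf1,
      Measure.map_dirac' hf1, Measure.map_dirac' hf1]
  · rw [hcondS, hcondT, hνdef, hν'def]
    intro heq
    have hval := congrArg (fun m : Measure (ℤ × ℤ) => m {((1 : ℤ), (1 : ℤ))}) heq
    simp only [Measure.map_add _ _ hf2, Measure.map_smul, Measure.map_dirac' hf2,
      Measure.coe_add, Pi.add_apply, Measure.smul_apply, smul_eq_mul,
      Measure.dirac_apply, Set.indicator_apply, Set.mem_singleton_iff, Prod.mk.injEq] at hval
    norm_num at hval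
    rcases hval with hval | ⟨hA0, hA'0⟩
    · rw [hhdef, ENNReal.ofReal_eq_zero] at hval
      linarith
    · rw [hA0, hA'0, add_zero] at hA
      exact zero_ne_one hA
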